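/- Let R be a commutative ring and M an additive cancellative commutative monoid that is torsion-free (for every x : M and n : ℕ with 0 < n, n • x = 0 implies x = 0). Then every idempotent element e of AddMonoidAlgebra R M is of the form AddMonoidAlgebra.single 0 r for some idempotent r of R; in other words, all idempotents of AddMonoidAlgebra R M lie in the image of the canonical algebra map from R. -/

import Mathlib

open Finsupp

section OrderLemmas

variable {S : Type*} [CommRing S] {Γ : Type*} [AddCommGroup Γ] [LinearOrder Γ] [IsOrderedAddMonoid Γ]

theorem my_mul_apply_le (p q : AddMonoidAlgebra S Γ) {a b : Γ}
    (hp : ∀ x ∈ p.coeff.support, x ≤ a) (hq : ∀ y ∈ q.coeff.support, y ≤ b) :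
    (p * q).coeff (a + b) = p.coeff a * q.coeff b := by
  classical
  simp_rw [AddMonoidAlgebra.coeff_mul, Finsupp.sum]
  rw [Finset.sum_eq_single a, Finset.sum_eq_single b, if_pos rfl]
  · intro y hy hne
    exact if_neg fun he => hne (add_left_cancel he)
  · intro hb
    rw [if_pos rfl, Finsupp.notMem_support_iff.mp hb, mul_zero]
  · intro x hx hne
    refine Finset.sum_eq_zero fun y hy => if_neg fun he => ?_
    exact (add_lt_add_of_lt_of_le ((hp x hx).lt_of_ne hne) (hq y hy)).ne he
  · intro ha
    exact Finset.sum_eq_zero fun y hy => by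
      simp [Finsupp.notMem_support_iff.mp ha]

theorem my_mul_apply_ge (p q : AddMonoidAlgebra S Γ) {a b : Γ}
    (hp : ∀ x ∈ p.coeff.support, a ≤ x) (hq : ∀ y ∈ q.coeff.support, b ≤ y) :
    (p * q).coeff (a + b) = p.coeff a * q.coeff b := by
  classical
  simp_rw [AddMonoidAlgebra.coeff_mul, Finsupp.sum]
  rw [Finset.sum_eq_single a, Finset.sum_eq_single b, if_pos rfl]
  · intro y hy hne
    exact if_neg fun he => hne (add_left_cancel he)
  · intro hb
    rw [if_pos rfl, Finsupp.notMem_support_iff.mp hb, mul_zero]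
  · intro x hx hne
    refine Finset.sum_eq_zero fun y hy => if_neg fun he => ?_
    exact ((add_lt_add_of_lt_of_le ((hp x hx).lt_of_ne' hne) (hq y hy)).ne' he)
  · intro ha
    exact Finset.sum_eq_zero fun y hy => by
      simp [Finsupp.notMem_support_iff.mp ha]

theorem my_support_pow_le (p : AddMonoidAlgebra S Γ) {t : Γ}
    (hp : ∀ x ∈ p.coeff.support, x ≤ t) :
    ∀ n, ∀ x ∈ (p ^ n).coeff.support, x ≤ n • t := by
  intro n
  induction n with
  | zero =>
    intro x hx
    rw [pow_zero, AddMonoidAlgebra.one_def, AddMonoidAlgebra.coeff_single] at hx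
    have := Finsupp.support_single_subset hx
    simp only [Finset.mem_singleton] at this
    simp [this]
  | succ n ih =>
    intro x hx
    rw [pow_succ] at hx
    obtain ⟨u, hu, v, hv, rfl⟩ := Finset.mem_add.mp (AddMonoidAlgebra.support_coeff_mul_subset _ _ hx)
    calc u + v ≤ n • t + t := add_le_add (ih u hu) (hp v hv)
    _ = (n + 1) • t := (succ_nsmul t n).symm

theorem my_pow_apply_top (p : AddMonoidAlgebra S Γ) {t : Γ}
    (hp : ∀ x ∈ p.coeff.support, x ≤ t) :
    ∀ n, (p ^ n).coeff (n • t) = (p.coeff t) ^ n := by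
  intro n
  induction n with
  | zero => simp [AddMonoidAlgebra.one_def]
  | succ n ih =>
    rw [pow_succ, succ_nsmul, my_mul_apply_le _ _ (my_support_pow_le p hp n) hp, ih, pow_succ]

end OrderLemmas

section NilpLemmas

variable {S : Type*} [CommRing S]

theorem my_isNilpotent_of_mul_self {a : S} (h : IsNilpotent (a * a)) : IsNilpotent a := by
  obtain ⟨k, hk⟩ := h
  exact ⟨2 * k, by rw [pow_mul, pow_two, hk]⟩

theorem my_isNilpotent_single {M : Type*} [AddCommMonoid M] (a : M) {b : S}
    (hb : IsNilpotent b) : IsNilpotent (AddMonoidAlgebra.single a b) := by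
  obtain ⟨k, hk⟩ := hb
  exact ⟨k, by rw [AddMonoidAlgebra.single_pow, hk]; simp⟩

theorem my_isNilpotent_of_coeffs {M : Type*} [AddCommMonoid M]
    (f : AddMonoidAlgebra S M) (h : ∀ m, IsNilpotent (f.coeff m)) : IsNilpotent f := by
  classical
  revert h
  induction f using AddMonoidAlgebra.induction with
  | zero => exact fun _ => ⟨1, by simp⟩
  | single_add a b f haf hb ih =>
    intro h
    have hb' : IsNilpotent b := by
      have := h a
      rwa [AddMonoidAlgebra.coeff_add, Finsupp.add_apply, AddMonoidAlgebra.coeff_single, Finsupp.single_eq_same,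
        Finsupp.notMem_support_iff.mp haf, add_zero] at this
    have hf : ∀ m, IsNilpotent (f.coeff m) := by
      intro m
      rcases eq_or_ne m a with rfl | hm
      · rw [Finsupp.notMem_support_iff.mp haf]; exact ⟨1, by simp⟩
      · have := h m
        rwa [AddMonoidAlgebra.coeff_add, Finsupp.add_apply, AddMonoidAlgebra.coeff_single, Finsupp.single_eq_of_ne' (Ne.symm hm), zero_add] at this
    exact (Commute.all _ _).isNilpotent_add (my_isNilpotent_single a hb') (ih hf)

variable {Γ : Type*} [AddCommGroup Γ] [LinearOrder Γ] [IsOrderedAddMonoid Γ]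

/-- In `S[Γ]` with `Γ` linearly ordered, all coefficients of a nilpotent element
are nilpotent. -/
theorem my_coeff_nilpotent_of_nilpotent :
    ∀ (n : ℕ) (z : AddMonoidAlgebra S Γ), z.coeff.support.card ≤ n →
      IsNilpotent z → ∀ v, IsNilpotent (z.coeff v) := by
  intro n
  induction n with
  | zero =>
    intro z hc _ v
    have : z = 0 := by
      rw [← AddMonoidAlgebra.coeff_eq_zero, ← Finsupp.support_eq_empty]
      exact Finset.card_eq_zero.mp (Nat.le_zero.mp hc)
    simp [this]
  | succ n ih =>
    intro z hc hz v
    by_cases hz0 : z = 0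
    · simp [hz0]
    have hne : z.coeff.support.Nonempty := Finsupp.support_nonempty_iff.mpr (AddMonoidAlgebra.coeff_eq_zero.not.mpr hz0)
    set t := z.coeff.support.max' hne with ht_def
    have htmem : t ∈ z.coeff.support := Finset.max'_mem _ _
    have ht : ∀ x ∈ z.coeff.support, x ≤ t := fun x hx => Finset.le_max' _ _ hx
    have htz : IsNilpotent (z.coeff t) := by
      obtain ⟨k, hk⟩ := hz
      refine ⟨k, ?_⟩
      rw [← my_pow_apply_top z ht k, hk]
      simp
    set st : AddMonoidAlgebra S Γ := AddMonoidAlgebra.single t (z.coeff t) with hst_def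
    have hst : IsNilpotent st := my_isNilpotent_single t htz
    set z' := z - st with hz'_def
    have hsupp : z'.coeff.support ⊆ z.coeff.support.erase t := by
      intro y hy
      have hy' : z'.coeff y ≠ 0 := Finsupp.mem_support_iff.mp hy
      rw [hz'_def, AddMonoidAlgebra.coeff_sub, Finsupp.sub_apply, hst_def, AddMonoidAlgebra.coeff_single] at hy'
      rcases eq_or_ne y t with rfl | hyt
      · rw [Finsupp.single_eq_same, sub_self] at hy'
        exact absurd rfl hy'
      · refine Finset.mem_erase.mpr ⟨hyt, Finsupp.mem_support_iff.mpr ?_⟩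
        rwa [Finsupp.single_eq_of_ne' (Ne.symm hyt), sub_zero] at hy'
    have hcard : z'.coeff.support.card ≤ n := by
      have h1 := Finset.card_le_card hsupp
      rw [Finset.card_erase_of_mem htmem] at h1
      omega
    have hz'nil : IsNilpotent z' := (Commute.all _ _).isNilpotent_sub hz hst
    have hrec := ih z' hcard hz'nil v
    have hzv : z.coeff v = z'.coeff v + st.coeff v := by
      rw [hz'_def, AddMonoidAlgebra.coeff_sub, Finsupp.sub_apply]; ring
    rw [hzv]
    refine (Commute.all _ _).isNilpotent_add hrec ?_
    rcases eq_or_ne v t with rfl | hvt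
    · simpa [hst_def, Finsupp.single_eq_same] using htz
    · rw [hst_def, AddMonoidAlgebra.coeff_single, Finsupp.single_eq_of_ne' (Ne.symm hvt)]
      exact ⟨1, by simp⟩

/-- In `S[Γ]` with `Γ` linearly ordered, if `x * x - x` is nilpotent then all coefficients
of `x` away from `0` are nilpotent. -/
theorem my_coeff_nilpotent_of_idem :
    ∀ (n : ℕ) (x : AddMonoidAlgebra S Γ), x.coeff.support.card ≤ n →
      IsNilpotent (x * x - x) → ∀ v, v ≠ 0 → IsNilpotent (x.coeff v) := by
  intro n
  induction n with
  | zero =>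
    intro x hc _ v _
    have : x = 0 := by
      rw [← AddMonoidAlgebra.coeff_eq_zero, ← Finsupp.support_eq_empty]
      exact Finset.card_eq_zero.mp (Nat.le_zero.mp hc)
    simp [this]
  | succ n ih =>
    intro x hc hx v hv
    by_cases h0 : ∀ u ∈ x.coeff.support, u = (0 : Γ)
    · have : v ∉ x.coeff.support := fun h => hv (h0 v h)
      rw [Finsupp.notMem_support_iff.mp this]
      exact ⟨1, by simp⟩
    push_neg at h0
    obtain ⟨u, hu, hu0⟩ := h0
    have hne : x.coeff.support.Nonempty := ⟨u, hu⟩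
    obtain ⟨c, hcmem, hmul, hzero, hc0⟩ :
        ∃ c ∈ x.coeff.support, (x * x).coeff (c + c) = x.coeff c * x.coeff c ∧ x.coeff (c + c) = 0 ∧ c ≠ 0 := by
      rcases lt_or_ge 0 u with hupos | huneg
      · set t := x.coeff.support.max' hne with ht_def
        have ht : ∀ y ∈ x.coeff.support, y ≤ t := fun y hy => Finset.le_max' _ _ hy
        have htpos : 0 < t := lt_of_lt_of_le hupos (ht u hu)
        refine ⟨t, Finset.max'_mem _ _, my_mul_apply_le x x ht ht, ?_, htpos.ne'⟩
        refine Finsupp.notMem_support_iff.mp fun hmem => ?_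
        exact absurd (ht _ hmem) (not_le.mpr (lt_add_of_pos_left t htpos))
      · have huneg' : u < 0 := lt_of_le_of_ne huneg hu0
        set s := x.coeff.support.min' hne with hs_def
        have hs : ∀ y ∈ x.coeff.support, s ≤ y := fun y hy => Finset.min'_le _ _ hy
        have hsneg : s < 0 := lt_of_le_of_lt (hs u hu) huneg'
        refine ⟨s, Finset.min'_mem _ _, my_mul_apply_ge x x hs hs, ?_, hsneg.ne⟩
        refine Finsupp.notMem_support_iff.mp fun hmem => ?_
        exact absurd (hs _ hmem) (not_le.mpr (add_lt_of_neg_left s hsneg))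
    have h1 : IsNilpotent ((x * x - x).coeff (c + c)) :=
      my_coeff_nilpotent_of_nilpotent _ _ le_rfl hx _
    rw [AddMonoidAlgebra.coeff_sub, Finsupp.sub_apply, hmul, hzero, sub_zero] at h1
    have hxc : IsNilpotent (x.coeff c) := my_isNilpotent_of_mul_self h1
    set st : AddMonoidAlgebra S Γ := AddMonoidAlgebra.single c (x.coeff c) with hst_def
    have hst : IsNilpotent st := my_isNilpotent_single c hxc
    set x' := x - st with hx'_def
    have hsupp : x'.coeff.support ⊆ x.coeff.support.erase c := by
      intro y hy
      have hy' : x'.coeff y ≠ 0 := Finsupp.mem_support_iff.mp hy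
      rw [hx'_def, AddMonoidAlgebra.coeff_sub, Finsupp.sub_apply, hst_def, AddMonoidAlgebra.coeff_single] at hy'
      rcases eq_or_ne y c with rfl | hyc
      · rw [Finsupp.single_eq_same, sub_self] at hy'
        exact absurd rfl hy'
      · refine Finset.mem_erase.mpr ⟨hyc, Finsupp.mem_support_iff.mpr ?_⟩
        rwa [Finsupp.single_eq_of_ne' (Ne.symm hyc), sub_zero] at hy'
    have hcard : x'.coeff.support.card ≤ n := by
      have h2 := Finset.card_le_card hsupp
      rw [Finset.card_erase_of_mem hcmem] at h2
      omega
    have hx'idem : IsNilpotent (x' * x' - x') := by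
      have heq : x' * x' - x' = (x * x - x) + (st * st + st - x * st - st * x) := by
        rw [hx'_def]; ring
      rw [heq]
      refine (Commute.all _ _).isNilpotent_add hx ?_
      refine (Commute.all _ _).isNilpotent_sub ((Commute.all _ _).isNilpotent_sub
        ((Commute.all _ _).isNilpotent_add ((Commute.all _ _).isNilpotent_mul_right hst) hst)
        ((Commute.all _ _).isNilpotent_mul_left hst)) ((Commute.all _ _).isNilpotent_mul_right hst)
    have hrec := ih x' hcard hx'idem v hv
    have hxv : x.coeff v = x'.coeff v + st.coeff v := by
      rw [hx'_def, AddMonoidAlgebra.coeff_sub, Finsupp.sub_apply]; ring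
    rw [hxv]
    refine (Commute.all _ _).isNilpotent_add hrec ?_
    rcases eq_or_ne v c with rfl | hvc
    · simpa [hst_def, Finsupp.single_eq_same] using hxc
    · rw [hst_def, AddMonoidAlgebra.coeff_single, Finsupp.single_eq_of_ne' (Ne.symm hvc)]
      exact ⟨1, by simp⟩

end NilpLemmas

section Key

variable {R : Type*} [CommRing R] {M : Type*} [AddCommMonoid M]
variable {Γ : Type*} [AddCommGroup Γ] [LinearOrder Γ] [IsOrderedAddMonoid Γ]

/-- If there is an additive weight `π : M →+ Γ` to a linearly ordered group whose "kernel"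
is trivial, then idempotents in `R[M]` are constants. -/
theorem my_key (π : M →+ Γ) (hπ : ∀ m, π m = 0 → m = 0)
    (e : AddMonoidAlgebra R M) (he : IsIdempotentElem e) :
    ∃ r : R, IsIdempotentElem r ∧ e = AddMonoidAlgebra.single 0 r := by
  classical
  -- the "grading" homomorphism Ψ : R[M] → (R[M])[Γ]
  set φ : Multiplicative M →* AddMonoidAlgebra (AddMonoidAlgebra R M) Γ :=
    { toFun := fun m => AddMonoidAlgebra.single (π m.toAdd) (AddMonoidAlgebra.single m.toAdd 1)
      map_one' := by
        simp only [toAdd_one, map_zero]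
        rfl
      map_mul' := fun m₁ m₂ => by
        simp only [toAdd_mul, map_add]
        rw [AddMonoidAlgebra.single_mul_single, AddMonoidAlgebra.single_mul_single, one_mul] } with hφ
  set Ψ : AddMonoidAlgebra R M →ₐ[R] AddMonoidAlgebra (AddMonoidAlgebra R M) Γ :=
    AddMonoidAlgebra.lift R (AddMonoidAlgebra (AddMonoidAlgebra R M) Γ) M φ with hΨ
  have hΨsingle : ∀ (m : M) (r : R),
      Ψ (AddMonoidAlgebra.single m r) = AddMonoidAlgebra.single (π m) (AddMonoidAlgebra.single m r) := by
    intro m r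
    rw [hΨ, AddMonoidAlgebra.lift_single]
    show r • AddMonoidAlgebra.single (π m) (AddMonoidAlgebra.single m (1 : R)) = _
    rw [AddMonoidAlgebra.smul_single, AddMonoidAlgebra.smul_single, smul_eq_mul, mul_one]
  -- the augmentation Θ : (R[M])[Γ] → R[M]
  set Θ : AddMonoidAlgebra (AddMonoidAlgebra R M) Γ →ₐ[AddMonoidAlgebra R M] AddMonoidAlgebra R M :=
    AddMonoidAlgebra.lift (AddMonoidAlgebra R M) (AddMonoidAlgebra R M) Γ 1 with hΘ
  have hΘsingle : ∀ (v : Γ) (s : AddMonoidAlgebra R M), Θ (AddMonoidAlgebra.single v s) = s := by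
    intro v s
    rw [hΘ, AddMonoidAlgebra.lift_single]
    show s • (1 : AddMonoidAlgebra R M) = s
    rw [smul_eq_mul, mul_one]
  -- Ψ e explicitly
  have h1 : Ψ e = e.coeff.sum fun m r => AddMonoidAlgebra.single (π m) (AddMonoidAlgebra.single m r) := by
    conv_lhs => rw [← AddMonoidAlgebra.sum_coeff_single e]
    rw [map_finsuppSum]
    exact Finsupp.sum_congr fun m _ => hΨsingle m _
  have hΘΨ : Θ (Ψ e) = e := by
    rw [h1, map_finsuppSum]
    conv_rhs => rw [← AddMonoidAlgebra.sum_coeff_single e]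
    exact Finsupp.sum_congr fun m _ => hΘsingle _ _
  -- coefficient of Ψ e at 0
  have h0 : (Ψ e).coeff 0 = AddMonoidAlgebra.single (0 : M) (e.coeff 0) := by
    rw [h1, AddMonoidAlgebra.coeff_finsuppSum, Finsupp.sum_apply]
    have : ∀ m ∈ e.coeff.support,
        (AddMonoidAlgebra.single (π m) (AddMonoidAlgebra.single m (e.coeff m))).coeff 0
          = if m = 0 then AddMonoidAlgebra.single m (e.coeff m) else 0 := by
      intro m _
      rcases eq_or_ne m 0 with rfl | hm
      · have hπ0 : π 0 = 0 := map_zero π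
        rw [hπ0, AddMonoidAlgebra.coeff_single, Finsupp.single_eq_same, if_pos rfl]
      · have hπm : π m ≠ 0 := fun h => hm (hπ m h)
        rw [AddMonoidAlgebra.coeff_single, Finsupp.single_eq_of_ne' hπm, if_neg hm]
    rw [Finsupp.sum, Finset.sum_congr rfl this, Finset.sum_ite_eq' e.coeff.support (0 : M)
      (fun m => AddMonoidAlgebra.single m (e.coeff m))]
    split_ifs with h
    · rfl
    · rw [Finsupp.notMem_support_iff.mp h]
      simp
  -- Ψ e is idempotent, hence its nonzero-degree coefficients are nilpotent
  have hΨe : IsNilpotent (Ψ e * Ψ e - Ψ e) := by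
    rw [← map_mul, he.eq, sub_self]
    exact ⟨1, pow_one 0⟩
  have hcoeff : ∀ v : Γ, v ≠ 0 → IsNilpotent ((Ψ e).coeff v) :=
    my_coeff_nilpotent_of_idem (Ψ e).coeff.support.card (Ψ e) le_rfl hΨe
  -- the "positive part" is nilpotent
  set nn : AddMonoidAlgebra (AddMonoidAlgebra R M) Γ := Ψ e - AddMonoidAlgebra.single 0 ((Ψ e).coeff 0) with hnn
  have hnncoeff : ∀ v : Γ, IsNilpotent (nn.coeff v) := by
    intro v
    rcases eq_or_ne v 0 with rfl | hv
    · rw [hnn, AddMonoidAlgebra.coeff_sub, Finsupp.sub_apply, AddMonoidAlgebra.coeff_single, Finsupp.single_eq_same, sub_self]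
      exact ⟨1, by simp⟩
    · rw [hnn, AddMonoidAlgebra.coeff_sub, Finsupp.sub_apply, AddMonoidAlgebra.coeff_single, Finsupp.single_eq_of_ne' (Ne.symm hv), sub_zero]
      exact hcoeff v hv
  have hnnnil : IsNilpotent nn := my_isNilpotent_of_coeffs nn hnncoeff
  -- d = e - single 0 (e 0) is nilpotent
  set a0 : R := e.coeff 0 with ha0
  set d : AddMonoidAlgebra R M := e - AddMonoidAlgebra.single 0 a0 with hd
  have hdnil : IsNilpotent d := by
    have : Θ nn = d := by
      rw [hnn, map_sub, hΘΨ, hΘsingle, h0, hd]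
    rw [← this]
    exact hnnnil.map Θ
  -- a0 * a0 - a0 is nilpotent in R
  have hsingnil : IsNilpotent (AddMonoidAlgebra.single (0 : M) (a0 * a0 - a0)) := by
    have h2 : AddMonoidAlgebra.single (0 : M) a0 = e - d := by rw [hd]; ring
    have h4 : AddMonoidAlgebra.single (0 : M) (a0 * a0)
        = AddMonoidAlgebra.single (0 : M) a0 * AddMonoidAlgebra.single (0 : M) a0 := by
      rw [AddMonoidAlgebra.single_mul_single, zero_add]
    have h5 : AddMonoidAlgebra.single (0 : M) (a0 * a0 - a0)
        = AddMonoidAlgebra.single (0 : M) (a0 * a0) - AddMonoidAlgebra.single (0 : M) a0 :=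
      AddMonoidAlgebra.single_sub _ _ _
    have heq : AddMonoidAlgebra.single (0 : M) (a0 * a0 - a0)
        = (e - d) * (e - d) - (e - d) := by
      rw [h5, h4, h2]
    have heq2 : (e - d) * (e - d) - (e - d) = (e * e - e) + (d * d + d - e * d - d * e) := by
      ring
    rw [heq, heq2, he.eq, sub_self, zero_add]
    refine (Commute.all _ _).isNilpotent_sub ((Commute.all _ _).isNilpotent_sub
      ((Commute.all _ _).isNilpotent_add ((Commute.all _ _).isNilpotent_mul_right hdnil) hdnil)
      ((Commute.all _ _).isNilpotent_mul_left hdnil)) ((Commute.all _ _).isNilpotent_mul_right hdnil)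
  have hc : IsNilpotent (a0 * a0 - a0) := by
    obtain ⟨k, hk⟩ := hsingnil
    refine ⟨k, ?_⟩
    rw [AddMonoidAlgebra.single_pow, smul_zero] at hk
    exact AddMonoidAlgebra.single_eq_zero.mp hk
  -- lift the idempotent a0 along the nilradical
  obtain ⟨r, hr, hrr⟩ : ∃ r : R, IsIdempotentElem r ∧
      Ideal.Quotient.mk (nilradical R) r = Ideal.Quotient.mk (nilradical R) a0 := by
    refine exists_isIdempotentElem_eq_of_ker_isNilpotent (Ideal.Quotient.mk (nilradical R))
      (fun x hx => ?_) _ ⟨a0, rfl⟩ ?_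
    · rw [Ideal.mk_ker] at hx
      exact mem_nilradical.mp hx
    · show Ideal.Quotient.mk (nilradical R) a0 * Ideal.Quotient.mk (nilradical R) a0 = _
      rw [← map_mul]
      rw [Ideal.Quotient.mk_eq_mk_iff_sub_mem]
      exact mem_nilradical.mpr hc
  have hra : IsNilpotent (a0 - r) :=
    mem_nilradical.mp ((Ideal.Quotient.mk_eq_mk_iff_sub_mem _ _).mp hrr.symm)
  -- the idempotents e and single 0 r differ by a nilpotent, hence are equal
  set f : AddMonoidAlgebra R M := AddMonoidAlgebra.single (0 : M) r with hf_def
  have hf : f * f = f := by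
    rw [hf_def, AddMonoidAlgebra.single_mul_single, zero_add, hr.eq]
  set w : AddMonoidAlgebra R M := e - f with hw_def
  have hwnil : IsNilpotent w := by
    have h6 : AddMonoidAlgebra.single (0 : M) (a0 - r)
        = AddMonoidAlgebra.single (0 : M) a0 - AddMonoidAlgebra.single (0 : M) r :=
      AddMonoidAlgebra.single_sub _ _ _
    have : w = d + AddMonoidAlgebra.single (0 : M) (a0 - r) := by
      rw [hw_def, hd, hf_def, h6]
      ring
    rw [this]
    exact (Commute.all _ _).isNilpotent_add hdnil (my_isNilpotent_single _ hra)
  have h3 : w ^ 3 = w := by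
    rw [hw_def]
    linear_combination (1 + e - 3 * f) * he.eq + (3 * e - 1 - f) * hf
  have hw2 : IsNilpotent (w * w) := (Commute.all _ _).isNilpotent_mul_right hwnil
  have hunit : IsUnit (1 - w * w) := hw2.isUnit_one_sub
  have hww : w * (1 - w * w) = 0 := by linear_combination -h3
  have hw0 : w = 0 := by
    obtain ⟨u, hu⟩ := hunit
    have h5 : w * u * u⁻¹ = 0 * u⁻¹ := by
      rw [hu, hww]
    rw [mul_assoc, Units.mul_inv, mul_one, zero_mul] at h5
    exact h5
  exact ⟨r, hr, sub_eq_zero.mp hw0⟩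

end Key

section Grothendieck

universe u

variable (M : Type u) [AddCancelCommMonoid M]

/-- The Grothendieck group congruence on `M × M`. -/
def myGrCon : AddCon (M × M) where
  r p q := p.1 + q.2 = q.1 + p.2
  iseqv :=
    { refl := fun _ => rfl
      symm := fun {p q} h => h.symm
      trans := fun {p q r} h1 h2 => by
        show p.1 + r.2 = r.1 + p.2
        have key : (p.1 + r.2) + (q.1 + q.2) = (r.1 + p.2) + (q.1 + q.2) := by
          calc (p.1 + r.2) + (q.1 + q.2) = (p.1 + q.2) + (q.1 + r.2) := by abel
          _ = (q.1 + p.2) + (r.1 + q.2) := by rw [h1, h2]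
          _ = (r.1 + p.2) + (q.1 + q.2) := by abel
        exact add_right_cancel key }
  add' := fun {w x y z} h1 h2 => by
    show (w.1 + y.1) + (x.2 + z.2) = (x.1 + z.1) + (w.2 + y.2)
    calc (w.1 + y.1) + (x.2 + z.2) = (w.1 + x.2) + (y.1 + z.2) := by abel
    _ = (x.1 + w.2) + (z.1 + y.2) := by rw [h1, h2]
    _ = (x.1 + z.1) + (w.2 + y.2) := by abel

instance myGrNeg : Neg (myGrCon M).Quotient :=
  ⟨fun x => AddCon.liftOn x (fun p => (((p.2, p.1) : M × M) : (myGrCon M).Quotient))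
    (fun p q h => (AddCon.eq _).mpr (by
      show p.2 + q.1 = q.2 + p.1
      rw [add_comm p.2 q.1, add_comm q.2 p.1]
      exact h.symm))⟩

instance myGrGroup : AddCommGroup (myGrCon M).Quotient :=
  { (inferInstance : AddCommMonoid (myGrCon M).Quotient),
    (inferInstance : Neg (myGrCon M).Quotient) with
    zsmul := zsmulRec
    neg_add_cancel := fun x => AddCon.induction_on x fun p => by
      show (((p.2, p.1) : M × M) : (myGrCon M).Quotient) + ↑p = ↑((0, 0) : M × M)
      rw [← AddCon.coe_add]
      refine (AddCon.eq _).mpr ?_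
      show (p.2 + p.1) + 0 = 0 + (p.1 + p.2)
      rw [add_zero, zero_add, add_comm] }

/-- The canonical map into the Grothendieck group. -/
def myGrHom : M →+ (myGrCon M).Quotient where
  toFun a := (((a, 0) : M × M) : (myGrCon M).Quotient)
  map_zero' := rfl
  map_add' a b := by
    rw [← AddCon.coe_add]
    refine (AddCon.eq _).mpr ?_
    show (a + b) + (0 + 0) = (a + b) + 0
    simp

theorem myGrHom_inj : Function.Injective (myGrHom M) := by
  intro a b h
  have h2 : (((a, 0) : M × M) : (myGrCon M).Quotient) = ↑((b, 0) : M × M) := h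
  have h3 : a + 0 = b + 0 := (AddCon.eq _).mp h2
  simpa using h3

theorem myGr_surj (x : (myGrCon M).Quotient) : ∃ a b : M, x = myGrHom M a - myGrHom M b := by
  refine AddCon.induction_on x fun p => ⟨p.1, p.2, ?_⟩
  rw [eq_sub_iff_add_eq]
  show (↑p : (myGrCon M).Quotient) + ↑((p.2, 0) : M × M) = ↑((p.1, 0) : M × M)
  rw [← AddCon.coe_add]
  refine (AddCon.eq _).mpr ?_
  show (p.1 + p.2) + 0 = p.1 + (p.2 + 0)
  rw [add_zero, add_zero]

theorem my_exists_pi {M : Type u} [AddCancelCommMonoid M]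
    (hM : ∀ (x : M) (n : ℕ), 0 < n → n • x = 0 → x = 0)
    (T : Set M) (hT : T.Finite) (hTtop : AddSubmonoid.closure T = ⊤) :
    ∃ (Γ : Type u) (_ : AddCommGroup Γ) (_ : LinearOrder Γ) (_ : IsOrderedAddMonoid Γ) (π : M →+ Γ),
      ∀ m : M, π m = 0 → m = 0 := by
  classical
  set G := (myGrCon M).Quotient with hG
  set i := myGrHom M with hi
  have him : ∀ m : M, i m ∈ Submodule.span ℤ (i '' T) := by
    intro m
    have hm : m ∈ AddSubmonoid.closure T := hTtop ▸ AddSubmonoid.mem_top m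
    refine AddSubmonoid.closure_induction ?_ ?_ ?_ hm
    · exact fun y hy => Submodule.subset_span ⟨y, hy, rfl⟩
    · rw [map_zero]; exact Submodule.zero_mem _
    · intro y z _ _ hy hz
      rw [map_add]; exact Submodule.add_mem _ hy hz
  haveI hfin : Module.Finite ℤ G := by
    refine ⟨Submodule.fg_def.mpr ⟨i '' T, hT.image i, ?_⟩⟩
    rw [eq_top_iff]
    rintro x -
    obtain ⟨a, b, rfl⟩ := myGr_surj M x
    exact Submodule.sub_mem _ (him a) (him b)
  set Q := G ⧸ Submodule.torsion ℤ G with hQ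
  haveI : Module.Free ℤ Q := Module.free_of_finite_type_torsion_free'
  set ι := Module.Free.ChooseBasisIndex ℤ Q with hι
  letI : LinearOrder ι := LinearOrder.lift' (Fintype.equivFin ι) (Equiv.injective _)
  set b := Module.Free.chooseBasis ℤ Q with hb
  set f : M → Lex (ι →₀ ℤ) :=
    fun m => toLex (b.repr (Submodule.Quotient.mk (i m))) with hf
  have hadd : ∀ x y : M, f (x + y) = f x + f y := by
    intro x y
    simp only [hf, map_add, Submodule.Quotient.mk_add]
    rfl
  refine ⟨Lex (ι →₀ ℤ), inferInstance, inferInstance, inferInstance, AddMonoidHom.mk' f hadd, ?_⟩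
  intro m hm
  have h1 : b.repr (Submodule.Quotient.mk (i m)) = 0 := hm
  have h2 : (Submodule.Quotient.mk (i m) : Q) = 0 := by
    rwa [LinearEquiv.map_eq_zero_iff] at h1
  have h3 : i m ∈ Submodule.torsion ℤ G := (Submodule.Quotient.mk_eq_zero _).mp h2
  obtain ⟨⟨n, hn0⟩, hn⟩ := (Submodule.mem_torsion_iff _).mp h3
  have hne : (n : ℤ) ≠ 0 := mem_nonZeroDivisors_iff_ne_zero.mp hn0
  have h4 : (n : ℤ) • i m = 0 := by simpa [Submonoid.smul_def] using hn
  have h5 : (n.natAbs : ℕ) • i m = 0 := by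
    rcases Int.natAbs_eq n with h | h
    · rw [← natCast_zsmul, ← h, h4]
    · rw [← natCast_zsmul, ← neg_neg ((n.natAbs : ℤ)), ← h, neg_zsmul, h4, neg_zero]
  have h6 : i (n.natAbs • m) = i 0 := by
    rw [map_nsmul, h5, map_zero]
  have h7 : n.natAbs • m = 0 := myGrHom_inj M h6
  exact hM m n.natAbs (Nat.pos_of_ne_zero (Int.natAbs_ne_zero.mpr hne)) h7

end Grothendieck

/-- For a torsion-free cancellative commutative monoid `M`, every idempotent of the
monoid algebra `R[M]` is a constant, i.e. of the form `single 0 r` for an idempotent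
`r` of `R`. -/
theorem addMonoidAlgebra_idempotent_eq_single_zero (R : Type*) [CommRing R]
    (M : Type*) [AddCancelCommMonoid M]
    (hM : ∀ (x : M) (n : ℕ), 0 < n → n • x = 0 → x = 0)
    (e : AddMonoidAlgebra R M) (he : IsIdempotentElem e) :
    ∃ r : R, IsIdempotentElem r ∧ e = AddMonoidAlgebra.single 0 r := by
  classical
  set N := AddSubmonoid.closure (↑e.coeff.support : Set M) with hN
  letI : AddCancelCommMonoid ↥N :=
    { (inferInstance : AddCommMonoid ↥N) with
      add_left_cancel := fun a b c h =>
        Subtype.ext (add_left_cancel (congrArg Subtype.val h)) }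
  have hNt : ∀ (x : ↥N) (n : ℕ), 0 < n → n • x = 0 → x = 0 := by
    intro x n hn h
    refine Subtype.ext (hM x.1 n hn ?_)
    have h2 : (N.subtype) (n • x) = n • (x : M) := map_nsmul N.subtype _ _
    rw [h, map_zero] at h2
    exact h2.symm
  have hTfin : (Subtype.val ⁻¹' (↑e.coeff.support : Set M) : Set ↥N).Finite :=
    Set.Finite.preimage Subtype.val_injective.injOn (e.coeff.support.finite_toSet)
  have hTtop : AddSubmonoid.closure (Subtype.val ⁻¹' (↑e.coeff.support : Set M))
      = (⊤ : AddSubmonoid ↥N) := AddSubmonoid.closure_closure_coe_preimage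
  obtain ⟨Γ, instΓ, instΓ2, instΓ3, π, hπ⟩ := my_exists_pi hNt _ hTfin hTtop
  letI := instΓ
  set e' : AddMonoidAlgebra R ↥N :=
    AddMonoidAlgebra.comapDomain Subtype.val Subtype.val_injective e with he'def
  have hmap : AddMonoidAlgebra.mapDomain Subtype.val e' = e := by
    refine AddMonoidAlgebra.mapDomain_comapDomain ?_ Subtype.val_injective
    intro a ha
    exact ⟨⟨a, AddSubmonoid.subset_closure ha⟩, rfl⟩
  set Φ : AddMonoidAlgebra R ↥N →+* AddMonoidAlgebra R M :=
    AddMonoidAlgebra.mapDomainRingHom R N.subtype with hΦdef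
  have hΦapp : ∀ g : AddMonoidAlgebra R ↥N, Φ g = AddMonoidAlgebra.mapDomain Subtype.val g :=
    fun g => rfl
  have hΦe : Φ e' = e := by rw [hΦapp]; exact hmap
  have hΦinj : Function.Injective Φ := fun x y h =>
    AddMonoidAlgebra.mapDomain_injective Subtype.val_injective
      (by rw [← hΦapp, ← hΦapp]; exact h)
  have he'idem : IsIdempotentElem e' := by
    refine hΦinj ?_
    rw [map_mul, hΦe, he.eq]
  obtain ⟨r, hr, hre⟩ := my_key π hπ e' he'idem
  refine ⟨r, hr, ?_⟩
  rw [← hΦe, hre, hΦapp, AddMonoidAlgebra.mapDomain_single]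
  rfl
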